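/- In a concurrent stepped-wedge design with m interventions and I = m(T−1) clusters, the weight matrix H of Theorem 1 equals H = [(1/c)(I_m + (d/g)·J_m)] ⊗ r' − (1/g)·J_m ⊗ v', where c = T(T−1)(3 + b − 2bT)/6, d = T[4T − 2 − 3bT(T−1)]/(12m), g = c − m·d = T(T−2)(2 + b − bT)/12, b = σα²/(Tσα² + σε²/n), r ∈ ℝ^{T−1} has j-th entry (T−j)[1 + b(1−T−j)/2], and v ∈ ℝ^{T−1} has j-th entry (T−j)[1 − bT + j/(T−1)]/(2m). -/
import Mathlib


open Matrix Finset

private lemma G1 (n : ℕ) : ∑ i ∈ range n, (i:ℝ) = n*(n-1)/2 := by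
  induction n with
  | zero => simp
  | succ n ih => rw [Finset.sum_range_succ, ih]; push_cast; ring

private lemma G2 (n : ℕ) : ∑ i ∈ range n, (i:ℝ)^2 = n*(n-1)*(2*n-1)/6 := by
  induction n with
  | zero => simp
  | succ n ih => rw [Finset.sum_range_succ, ih]; push_cast; ring

private lemma Chead (k n : ℕ) (h : k ≤ n) (f : ℕ → ℝ) :
    ∑ i ∈ range n, (if i < k then f i else 0) = ∑ i ∈ range k, f i := by
  rw [← Finset.sum_subset (Finset.range_subset_range.mpr h)
    (fun x _ hxk => if_neg (by simpa using hxk))]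
  exact Finset.sum_congr rfl fun i hi => if_pos (Finset.mem_range.mp hi)

private lemma Ctail (k n : ℕ) (h : k ≤ n) (f : ℕ → ℝ) :
    ∑ i ∈ range n, (if k ≤ i then f i else 0) = ∑ i ∈ range n, f i - ∑ i ∈ range k, f i := by
  rw [← Chead k n h f, eq_sub_iff_add_eq, ← Finset.sum_add_distrib]
  apply Finset.sum_congr rfl; intro i _
  by_cases hi : k ≤ i
  · simp [hi, Nat.not_lt.mpr hi]
  · simp [hi, Nat.lt_of_not_le hi]

private lemma Dsum (N a c : ℕ) (x : ℝ) :
    ∑ l ∈ range N, (if a = l + c then x else 0) = if c ≤ a ∧ a < N + c then x else 0 := by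
  by_cases hca : c ≤ a ∧ a < N + c
  · rw [if_pos hca, Finset.sum_eq_single (a - c)]
    · rw [if_pos (by omega)]
    · intro l _ hl; exact if_neg (by omega)
    · intro hmem; exact absurd (Finset.mem_range.mpr (by omega)) hmem
  · rw [if_neg hca, Finset.sum_eq_zero]
    intro l hl; rw [Finset.mem_range] at hl; exact if_neg (by omega)

private lemma cwm_cnt (T a : ℕ) (h : a ≤ T) :
    ∑ t : Fin T, (if a ≤ (t:ℕ) then (1:ℝ) else 0) = (T:ℝ) - a := by
  rw [Fin.sum_univ_eq_sum_range (fun j => if a ≤ j then (1:ℝ) else 0) T, Ctail a T h]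
  simp

private lemma cwm_cntid (T a : ℕ) (h : a ≤ T) :
    ∑ t : Fin T, (if a ≤ (t:ℕ) then ((t:ℕ):ℝ) else 0)
      = (T:ℝ)*((T:ℝ)-1)/2 - (a:ℝ)*((a:ℝ)-1)/2 := by
  rw [Fin.sum_univ_eq_sum_range (fun j => if a ≤ j then (j:ℝ) else 0) T, Ctail a T h, G1, G1]

private lemma cwm_id (T : ℕ) : ∑ t : Fin T, ((t:ℕ):ℝ) = (T:ℝ)*((T:ℝ)-1)/2 := by
  rw [Fin.sum_univ_eq_sum_range (fun j => (j:ℝ)) T, G1]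

private lemma cwm_sq (T : ℕ) : ∑ t : Fin T, ((t:ℕ):ℝ)^2 = (T:ℝ)*((T:ℝ)-1)*(2*(T:ℝ)-1)/6 := by
  rw [Fin.sum_univ_eq_sum_range (fun j => (j:ℝ)^2) T, G2]

private lemma cwm_eqa (T a : ℕ) (f : ℕ → ℝ) :
    ∑ t : Fin T, (if (t:ℕ) = a then f (t:ℕ) else 0) = if a < T then f a else 0 := by
  rw [Fin.sum_univ_eq_sum_range (fun j => if j = a then f j else 0) T,
    Finset.sum_ite_eq' (range T) a f]
  simp [Finset.mem_range]

set_option maxHeartbeats 2000000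

/-- Proposition 1: in a concurrent stepped-wedge design with `m` interventions and
`I = m(T−1)` clusters, the weight matrix `H` of Theorem 1 equals
`[(1/c)(I_m + (d/g)·J_m)] ⊗ r' − (1/g)·J_m ⊗ v'`, written entrywise below.
Clusters are indexed by pairs `(k₀, l)` (intervention `k₀`, sequence `l`). -/
theorem concurrent_weight_matrix
    (T mI : ℕ) (hT : 3 ≤ T) (hm : 1 ≤ mI)
    (salpha seps n : ℝ) (hsalpha : 0 ≤ salpha) (hseps : 0 < seps) (hn : 0 < n)
    (b c d g : ℝ)
    (hb : b = salpha / ((T : ℝ) * salpha + seps / n))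
    (hc : c = (T : ℝ) * ((T : ℝ) - 1) * (3 + b - 2 * b * (T : ℝ)) / 6)
    (hd : d = (T : ℝ) * (4 * (T : ℝ) - 2 - 3 * b * (T : ℝ) * ((T : ℝ) - 1)) / (12 * (mI : ℝ)))
    (hg : g = (T : ℝ) * ((T : ℝ) - 2) * (2 + b - b * (T : ℝ)) / 12)
    (hc0 : c ≠ 0) (hg0 : g ≠ 0)
    (r v : Fin (T - 1) → ℝ)
    (hr : ∀ j : Fin (T - 1),
      r j = ((T : ℝ) - ((j : ℕ) + 1 : ℕ)) * (1 + b * (1 - (T : ℝ) - ((j : ℕ) + 1 : ℕ)) / 2))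
    (hv : ∀ j : Fin (T - 1),
      v j = ((T : ℝ) - ((j : ℕ) + 1 : ℕ))
        * (1 - b * (T : ℝ) + ((j : ℕ) + 1 : ℕ) / ((T : ℝ) - 1)) / (2 * (mI : ℝ)))
    -- common covariance matrix Σ = σα²J + (σε²/n)I
    (V : Matrix (Fin T) (Fin T) ℝ)
    (hV : V = salpha • (Matrix.of fun _ _ => (1 : ℝ)) + (seps / n) • 1)
    -- constant-effect working design matrices
    (X : Fin mI × Fin (T - 1) → Matrix (Fin T) (Fin mI) ℝ)
    (hX : ∀ i j k, X i j k = if k = i.1 ∧ (i.2 : ℕ) + 1 ≤ (j : ℕ) then 1 else 0)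
    -- true exposure-time indicator matrices
    (Z : Fin mI × Fin (T - 1) → Matrix (Fin T) (Fin mI × Fin (T - 1)) ℝ)
    (hZ : ∀ i j ke, Z i j ke = if ke.1 = i.1 ∧ (j : ℕ) = (i.2 : ℕ) + (ke.2 : ℕ) + 1 then 1 else 0)
    -- the weight matrix H from Theorem 1
    (S : Matrix (Fin mI) (Fin T) ℝ) (hS : S = ∑ i, (X i)ᵀ * V⁻¹)
    (AW : Matrix (Fin mI) (Fin mI) ℝ)
    (hAW : AW = (∑ i, (X i)ᵀ * V⁻¹ * X i)
        - S * (((mI * (T - 1) : ℕ) : ℝ)⁻¹ • ∑ i, X i))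
    (H : Matrix (Fin mI) (Fin mI × Fin (T - 1)) ℝ)
    (hH : H = AW⁻¹ * ((∑ i, (X i)ᵀ * V⁻¹ * Z i)
        - S * (((mI * (T - 1) : ℕ) : ℝ)⁻¹ • ∑ i, Z i))) :
    ∀ (k k' : Fin mI) (e : Fin (T - 1)),
      H k (k', e) = (1 / c) * ((if k = k' then 1 else 0) + d / g) * r e - (1 / g) * v e := by
  -- basic facts
  have hT1 : (1:ℕ) ≤ T := by omega
  have hT1R : ((T-1:ℕ):ℝ) = (T:ℝ) - 1 := by
    rw [Nat.cast_sub hT1, Nat.cast_one]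
  have hTR3 : (3:ℝ) ≤ (T:ℝ) := by exact_mod_cast hT
  have hm0 : (0:ℝ) < (mI:ℝ) := by exact_mod_cast hm
  have hmne : (mI:ℝ) ≠ 0 := ne_of_gt hm0
  have hT1ne : (T:ℝ) - 1 ≠ 0 := by linarith
  have hwpos : (0:ℝ) < n / seps := div_pos hn hseps
  have hwne : (n / seps : ℝ) ≠ 0 := ne_of_gt hwpos
  set w : ℝ := n / seps with hwdef
  have hμ : ((mI * (T - 1) : ℕ) : ℝ) = (mI:ℝ) * ((T:ℝ) - 1) := by
    rw [Nat.cast_mul, hT1R]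
  -- inverse of V
  have hWV : V⁻¹ = Matrix.of (fun t t' : Fin T => w * ((if t = t' then 1 else 0) - b)) := by
    have hs0 : 0 < seps / n := div_pos hseps hn
    have hden : 0 < (T:ℝ) * salpha + seps / n := by
      have : 0 ≤ (T:ℝ) * salpha := mul_nonneg (by positivity) hsalpha
      linarith
    have hbkey : b * ((T:ℝ) * salpha + seps / n) = salpha := by
      rw [hb]; field_simp
    have hns : w * (seps/n) = 1 := by rw [hwdef]; field_simp
    apply Matrix.inv_eq_left_inv
    ext t t''
    simp only [Matrix.mul_apply, Matrix.of_apply, hV, Matrix.add_apply, Matrix.smul_apply,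
      Matrix.one_apply, smul_eq_mul]
    have expand : ∀ t' : Fin T, w * ((if t = t' then 1 else 0) - b) *
        (salpha * 1 + seps / n * (if t' = t'' then 1 else 0))
        = w * salpha * (if t = t' then 1 else 0)
          + (if t = t' then 1 else 0) * (if t' = t'' then 1 else 0)
          - w * b * salpha - w * b * (seps/n) * (if t' = t'' then 1 else 0) := by
      intro t'
      linear_combination ((if t = t' then (1:ℝ) else 0) * (if t' = t'' then (1:ℝ) else 0)) * hns
    rw [Finset.sum_congr rfl (fun t' _ => expand t')]
    simp only [Finset.sum_sub_distrib, Finset.sum_add_distrib, Finset.sum_const,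
      Finset.card_univ, Fintype.card_fin, ← Finset.mul_sum, nsmul_eq_mul]
    rw [Finset.sum_ite_eq Finset.univ t (fun _ => (1:ℝ))]
    have h2 : ∑ t' : Fin T, (if t = t' then 1 else 0) * (if t' = t'' then (1:ℝ) else 0)
        = if t = t'' then 1 else 0 := by
      rw [Finset.sum_eq_single t'']
      · by_cases h : t = t'' <;> simp [h]
      · intro l _ hl; simp [hl]
      · simp
    rw [h2]
    have h3 : ∑ t' : Fin T, (if t' = t'' then (1:ℝ) else 0) = 1 := by
      rw [Finset.sum_ite_eq' Finset.univ t'' (fun _ => (1:ℝ))]; simp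
    rw [h3]
    simp only [Finset.mem_univ, if_true]
    linear_combination (-w) * hbkey
  intro k k' e
  have hel : (e:ℕ) < T - 1 := e.isLt
  -- inner collapse over the first V⁻¹ index
  have inner : ∀ (a : ℕ), a ≤ T → ∀ (t' : Fin T),
      ∑ t : Fin T, (if a ≤ (t:ℕ) then (1:ℝ) else 0) * (w * ((if t = t' then 1 else 0) - b))
        = w * ((if a ≤ (t':ℕ) then 1 else 0) - b * ((T:ℝ) - a)) := by
    intro a ha t'
    have step : ∀ t : Fin T, (if a ≤ (t:ℕ) then (1:ℝ) else 0) * (w * ((if t = t' then 1 else 0) - b))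
        = w * ((if a ≤ (t:ℕ) then (1:ℝ) else 0) * (if t = t' then 1 else 0))
          - w * b * (if a ≤ (t:ℕ) then (1:ℝ) else 0) := fun t => by ring
    rw [Finset.sum_congr rfl (fun t _ => step t), Finset.sum_sub_distrib, ← Finset.mul_sum,
      ← Finset.mul_sum]
    have d1 : ∑ t : Fin T, (if a ≤ (t:ℕ) then (1:ℝ) else 0) * (if t = t' then 1 else 0)
        = (if a ≤ (t':ℕ) then (1:ℝ) else 0) := by
      rw [Finset.sum_eq_single t']
      · simp
      · intro t _ ht; simp [ht]
      · simp
    rw [d1, cwm_cnt T a ha]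
    ring
  have sumNL : ∑ j ∈ range (T-1), ((T:ℝ) - ((j:ℝ)+1)) = (T:ℝ)*((T:ℝ)-1)/2 := by
    have expand : ∀ j : ℕ, ((T:ℝ) - ((j:ℝ)+1)) = ((T:ℝ)-1) - (j:ℝ) := fun j => by ring
    rw [Finset.sum_congr rfl (fun j _ => expand j), Finset.sum_sub_distrib, G1,
      Finset.sum_const, Finset.card_range, nsmul_eq_mul, hT1R]
    ring
  have sumNL2 : ∑ j ∈ range (T-1), ((T:ℝ) - ((j:ℝ)+1))^2 = (T:ℝ)*((T:ℝ)-1)*(2*(T:ℝ)-1)/6 := by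
    have expand : ∀ j : ℕ, ((T:ℝ) - ((j:ℝ)+1))^2
        = (((T:ℝ)-1)^2 - (2*((T:ℝ)-1))*(j:ℝ)) + (j:ℝ)^2 := fun j => by ring
    rw [Finset.sum_congr rfl (fun j _ => expand j), Finset.sum_add_distrib,
      Finset.sum_sub_distrib, ← Finset.mul_sum, G1, G2, Finset.sum_const,
      Finset.card_range, nsmul_eq_mul, hT1R]
    ring
  have deltaSum : ∀ (k₁ k₂ : Fin mI) (x : ℝ),
      ∑ k₀ : Fin mI, (if k₁ = k₀ ∧ k₂ = k₀ then x else 0) = if k₁ = k₂ then x else 0 := by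
    intro k₁ k₂ x
    by_cases hkk : k₁ = k₂
    · subst hkk
      rw [if_pos rfl, Finset.sum_congr rfl (fun k₀ _ => if_congr and_self_iff rfl rfl),
        Finset.sum_ite_eq Finset.univ k₁ (fun _ => x)]
      simp
    · rw [if_neg hkk, Finset.sum_eq_zero]
      intro k₀ _
      exact if_neg (fun h => hkk (h.1.trans h.2.symm))
  have cnt2 : ∀ t : Fin T,
      ∑ l : Fin (T-1), (if (l:ℕ)+1 ≤ (t:ℕ) then (1:ℝ) else 0) = ((t:ℕ):ℝ) := by
    intro t
    rw [Fin.sum_univ_eq_sum_range (fun j => if j+1 ≤ (t:ℕ) then (1:ℝ) else 0) (T-1),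
      Finset.sum_congr rfl (fun j _ => if_congr (show j+1 ≤ (t:ℕ) ↔ j < (t:ℕ) by omega) rfl rfl),
      Chead (t:ℕ) (T-1) (by have := t.isLt; omega)]
    simp
  -- entries of ∑ Xᵀ V⁻¹ X
  have hA1 : ∀ (p q : Fin mI), (∑ i, (X i)ᵀ * V⁻¹ * X i) p q
      = if p = q then w * ((T:ℝ)*((T:ℝ)-1)/2 - b * ((T:ℝ)*((T:ℝ)-1)*(2*(T:ℝ)-1)/6)) else 0 := by
    intro p q
    have hterm : ∀ (k₀ : Fin mI) (l : Fin (T-1)),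
        ((X (k₀,l))ᵀ * V⁻¹ * X (k₀,l)) p q
        = if p = k₀ ∧ q = k₀ then
            w * (((T:ℝ) - ((l:ℕ)+1 : ℕ)) - b * ((T:ℝ) - ((l:ℕ)+1 : ℕ))^2) else 0 := by
      intro k₀ l
      have hl : (l:ℕ)+1 ≤ T := by have := l.isLt; omega
      by_cases hkk : p = k₀ ∧ q = k₀
      · obtain ⟨h1, h2⟩ := hkk
        rw [if_pos ⟨h1, h2⟩]
        simp only [Matrix.mul_apply, Matrix.transpose_apply, hWV, Matrix.of_apply, hX, h1, h2,
          eq_self_iff_true, true_and]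
        rw [Finset.sum_congr rfl (fun t' _ => by rw [inner ((l:ℕ)+1) hl t'])]
        have step2 : ∀ t' : Fin T,
            (w * ((if (l:ℕ)+1 ≤ (t':ℕ) then (1:ℝ) else 0) - b * ((T:ℝ) - ((l:ℕ)+1 : ℕ))))
              * (if (l:ℕ)+1 ≤ (t':ℕ) then (1:ℝ) else 0)
            = (w - w * b * ((T:ℝ) - ((l:ℕ)+1 : ℕ))) * (if (l:ℕ)+1 ≤ (t':ℕ) then (1:ℝ) else 0) := by
          intro t'; by_cases h : (l:ℕ)+1 ≤ (t':ℕ) <;> simp [h] <;> ring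
        rw [Finset.sum_congr rfl (fun t' _ => step2 t'), ← Finset.mul_sum, cwm_cnt T _ hl]
        ring
      · rw [if_neg hkk]
        rw [not_and_or] at hkk
        simp only [Matrix.mul_apply, Matrix.transpose_apply, hX]
        rcases hkk with h1 | h2
        · simp [h1]
        · simp [h2]
    rw [Matrix.sum_apply, Fintype.sum_prod_type]
    rw [Finset.sum_congr rfl (fun k₀ _ => Finset.sum_congr rfl (fun l _ => hterm k₀ l))]
    have pull : ∀ k₀ : Fin mI, (∑ l : Fin (T-1), if p = k₀ ∧ q = k₀ then
        w * (((T:ℝ) - ((l:ℕ)+1 : ℕ)) - b * ((T:ℝ) - ((l:ℕ)+1 : ℕ))^2) else 0)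
        = if p = k₀ ∧ q = k₀ then
            ∑ l : Fin (T-1), (w * (((T:ℝ) - ((l:ℕ)+1 : ℕ)) - b * ((T:ℝ) - ((l:ℕ)+1 : ℕ))^2))
          else 0 := by
      intro k₀; split <;> simp
    rw [Finset.sum_congr rfl (fun k₀ _ => pull k₀), deltaSum p q]
    have hval : ∑ l : Fin (T-1), (w * (((T:ℝ) - ((l:ℕ)+1 : ℕ)) - b * ((T:ℝ) - ((l:ℕ)+1 : ℕ))^2))
        = w * ((T:ℝ)*((T:ℝ)-1)/2 - b * ((T:ℝ)*((T:ℝ)-1)*(2*(T:ℝ)-1)/6)) := by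
      rw [Fin.sum_univ_eq_sum_range
        (fun j => w * (((T:ℝ) - (j+1 : ℕ)) - b * ((T:ℝ) - (j+1 : ℕ))^2)) (T-1)]
      have expand : ∀ j : ℕ, w * (((T:ℝ) - (j+1 : ℕ)) - b * ((T:ℝ) - (j+1 : ℕ))^2)
          = w * ((T:ℝ) - ((j:ℝ)+1)) - w * b * ((T:ℝ) - ((j:ℝ)+1))^2 := by
        intro j; push_cast; ring
      rw [Finset.sum_congr rfl (fun j _ => expand j), Finset.sum_sub_distrib, ← Finset.mul_sum,
        ← Finset.mul_sum, sumNL, sumNL2]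
      ring
    rw [hval]
  -- entries of S
  have hSe : ∀ (p : Fin mI) (t : Fin T),
      S p t = w * (((t:ℕ):ℝ) - b * ((T:ℝ)*((T:ℝ)-1)/2)) := by
    intro p t
    rw [hS, Matrix.sum_apply, Fintype.sum_prod_type]
    have hterm : ∀ (k₀ : Fin mI) (l : Fin (T-1)), ((X (k₀,l))ᵀ * V⁻¹) p t
        = if p = k₀ then w * ((if (l:ℕ)+1 ≤ (t:ℕ) then (1:ℝ) else 0)
            - b * ((T:ℝ) - ((l:ℕ)+1 : ℕ))) else 0 := by
      intro k₀ l
      have hl : (l:ℕ)+1 ≤ T := by have := l.isLt; omega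
      simp only [Matrix.mul_apply, Matrix.transpose_apply, hWV, Matrix.of_apply, hX]
      by_cases h1 : p = k₀
      · rw [if_pos h1]
        simp only [h1, eq_self_iff_true, true_and]
        exact inner ((l:ℕ)+1) hl t
      · rw [if_neg h1]
        apply Finset.sum_eq_zero; intro t' _; simp [h1]
    rw [Finset.sum_congr rfl (fun k₀ _ => Finset.sum_congr rfl (fun l _ => hterm k₀ l))]
    have pull : ∀ k₀ : Fin mI, (∑ l : Fin (T-1), if p = k₀ then
        w * ((if (l:ℕ)+1 ≤ (t:ℕ) then (1:ℝ) else 0) - b * ((T:ℝ) - ((l:ℕ)+1 : ℕ))) else 0)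
        = if p = k₀ then ∑ l : Fin (T-1),
            w * ((if (l:ℕ)+1 ≤ (t:ℕ) then (1:ℝ) else 0) - b * ((T:ℝ) - ((l:ℕ)+1 : ℕ))) else 0 := by
      intro k₀; split <;> simp
    rw [Finset.sum_congr rfl (fun k₀ _ => pull k₀),
      Finset.sum_ite_eq Finset.univ p _, if_pos (Finset.mem_univ p)]
    have expand : ∀ l : Fin (T-1),
        w * ((if (l:ℕ)+1 ≤ (t:ℕ) then (1:ℝ) else 0) - b * ((T:ℝ) - ((l:ℕ)+1 : ℕ)))
        = w * (if (l:ℕ)+1 ≤ (t:ℕ) then (1:ℝ) else 0) - w * b * ((T:ℝ) - (((l:ℕ):ℝ)+1)) := by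
      intro l; push_cast; ring
    rw [Finset.sum_congr rfl (fun l _ => expand l), Finset.sum_sub_distrib, ← Finset.mul_sum,
      ← Finset.mul_sum, cnt2 t,
      Fin.sum_univ_eq_sum_range (fun j => (T:ℝ) - ((j:ℝ)+1)) (T-1), sumNL]
    ring
  -- entries of S * (μ • ∑ X)
  have hA3 : ∀ (p q : Fin mI), (S * (((mI * (T - 1) : ℕ) : ℝ)⁻¹ • ∑ i, X i)) p q
      = ((mI:ℝ) * ((T:ℝ)-1))⁻¹ * w * ((T:ℝ)*((T:ℝ)-1)*(2*(T:ℝ)-1)/6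
          - b * ((T:ℝ)*((T:ℝ)-1)/2) * ((T:ℝ)*((T:ℝ)-1)/2)) := by
    intro p q
    have hA2 : ∀ (t : Fin T), (∑ i, X i) t q = ((t:ℕ):ℝ) := by
      intro t
      rw [Matrix.sum_apply, Fintype.sum_prod_type]
      have hterm : ∀ (k₀ : Fin mI) (l : Fin (T-1)), X (k₀,l) t q
          = if q = k₀ then (if (l:ℕ)+1 ≤ (t:ℕ) then (1:ℝ) else 0) else 0 := by
        intro k₀ l; rw [hX]; exact ite_and _ _ _ _
      rw [Finset.sum_congr rfl (fun k₀ _ => Finset.sum_congr rfl (fun l _ => hterm k₀ l))]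
      have pull : ∀ k₀ : Fin mI, (∑ l : Fin (T-1), if q = k₀ then
          (if (l:ℕ)+1 ≤ (t:ℕ) then (1:ℝ) else 0) else 0)
          = if q = k₀ then ∑ l : Fin (T-1), (if (l:ℕ)+1 ≤ (t:ℕ) then (1:ℝ) else 0) else 0 := by
        intro k₀; split <;> simp
      rw [Finset.sum_congr rfl (fun k₀ _ => pull k₀),
        Finset.sum_ite_eq Finset.univ q _, if_pos (Finset.mem_univ q), cnt2 t]
    simp only [Matrix.mul_apply, Matrix.smul_apply, smul_eq_mul]
    rw [Finset.sum_congr rfl (fun t _ => by rw [hSe p t, hA2 t, hμ])]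
    have expand : ∀ t : Fin T,
        w * (((t:ℕ):ℝ) - b * ((T:ℝ)*((T:ℝ)-1)/2)) * (((mI:ℝ)*((T:ℝ)-1))⁻¹ * ((t:ℕ):ℝ))
        = ((mI:ℝ)*((T:ℝ)-1))⁻¹ * w * ((t:ℕ):ℝ)^2
          - ((mI:ℝ)*((T:ℝ)-1))⁻¹ * w * b * ((T:ℝ)*((T:ℝ)-1)/2) * ((t:ℕ):ℝ) := by
      intro t; ring
    rw [Finset.sum_congr rfl (fun t _ => expand t), Finset.sum_sub_distrib, ← Finset.mul_sum,
      ← Finset.mul_sum, cwm_sq, cwm_id]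
    ring
  -- entries of ∑ Xᵀ V⁻¹ Z at column (k', e)
  have hB1 : ∀ (p : Fin mI), (∑ i, (X i)ᵀ * V⁻¹ * Z i) p (k', e)
      = if p = k' then w * (((T - 1 - (e:ℕ) : ℕ):ℝ)
          - b * (((T - 1 - (e:ℕ) : ℕ):ℝ)*((T:ℝ)-1)
            - ((T - 1 - (e:ℕ) : ℕ):ℝ)*(((T - 1 - (e:ℕ) : ℕ):ℝ)-1)/2)) else 0 := by
    intro p
    have hterm : ∀ (k₀ : Fin mI) (l : Fin (T-1)),
        ((X (k₀,l))ᵀ * V⁻¹ * Z (k₀,l)) p (k', e)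
        = if p = k₀ ∧ k' = k₀ then
            (if (l:ℕ) + (e:ℕ) + 1 < T then
              w * (1 - b * ((T:ℝ) - ((l:ℕ)+1 : ℕ))) else 0) else 0 := by
      intro k₀ l
      have hl : (l:ℕ)+1 ≤ T := by have := l.isLt; omega
      by_cases hkk : p = k₀ ∧ k' = k₀
      · obtain ⟨h1, h2⟩ := hkk
        rw [if_pos ⟨h1, h2⟩]
        simp only [Matrix.mul_apply, Matrix.transpose_apply, hWV, Matrix.of_apply, hX, hZ, h1, h2,
          eq_self_iff_true, true_and]
        rw [Finset.sum_congr rfl (fun t' _ => by rw [inner ((l:ℕ)+1) hl t'])]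
        have swap : ∀ t' : Fin T,
            (w * ((if (l:ℕ)+1 ≤ (t':ℕ) then (1:ℝ) else 0) - b * ((T:ℝ) - ((l:ℕ)+1 : ℕ))))
              * (if (t':ℕ) = (l:ℕ) + (e:ℕ) + 1 then (1:ℝ) else 0)
            = if (t':ℕ) = (l:ℕ) + (e:ℕ) + 1 then
                (fun j : ℕ => w * ((if (l:ℕ)+1 ≤ j then (1:ℝ) else 0)
                  - b * ((T:ℝ) - ((l:ℕ)+1 : ℕ)))) (t':ℕ) else 0 := by
          intro t'; by_cases h : (t':ℕ) = (l:ℕ)+(e:ℕ)+1 <;> simp [h]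
        rw [Finset.sum_congr rfl (fun t' _ => swap t')]
        refine (cwm_eqa T ((l:ℕ)+(e:ℕ)+1) (fun j => w * ((if (l:ℕ)+1 ≤ j then (1:ℝ) else 0) - b * ((T:ℝ) - ((l:ℕ)+1 : ℕ))))).trans ?_
        by_cases hlt : (l:ℕ)+(e:ℕ)+1 < T
        · rw [if_pos hlt, if_pos hlt]
          simp [show (l:ℕ)+1 ≤ (l:ℕ)+(e:ℕ)+1 from by omega]
        · rw [if_neg hlt, if_neg hlt]
      · rw [if_neg hkk]
        rw [not_and_or] at hkk
        simp only [Matrix.mul_apply, Matrix.transpose_apply, hX, hZ]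
        rcases hkk with h1 | h2
        · simp [h1]
        · simp [h2]
    rw [Matrix.sum_apply, Fintype.sum_prod_type]
    rw [Finset.sum_congr rfl (fun k₀ _ => Finset.sum_congr rfl (fun l _ => hterm k₀ l))]
    have pull : ∀ k₀ : Fin mI, (∑ l : Fin (T-1), if p = k₀ ∧ k' = k₀ then
        (if (l:ℕ) + (e:ℕ) + 1 < T then w * (1 - b * ((T:ℝ) - ((l:ℕ)+1 : ℕ))) else 0) else 0)
        = if p = k₀ ∧ k' = k₀ then ∑ l : Fin (T-1),
            (if (l:ℕ) + (e:ℕ) + 1 < T then w * (1 - b * ((T:ℝ) - ((l:ℕ)+1 : ℕ))) else 0)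
          else 0 := by
      intro k₀; split <;> simp
    rw [Finset.sum_congr rfl (fun k₀ _ => pull k₀), deltaSum p k']
    have hval : ∑ l : Fin (T-1),
        (if (l:ℕ) + (e:ℕ) + 1 < T then w * (1 - b * ((T:ℝ) - ((l:ℕ)+1 : ℕ))) else 0)
        = w * (((T - 1 - (e:ℕ) : ℕ):ℝ)
          - b * (((T - 1 - (e:ℕ) : ℕ):ℝ)*((T:ℝ)-1)
            - ((T - 1 - (e:ℕ) : ℕ):ℝ)*(((T - 1 - (e:ℕ) : ℕ):ℝ)-1)/2)) := by
      rw [Fin.sum_univ_eq_sum_range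
        (fun j => if j + (e:ℕ) + 1 < T then w * (1 - b * ((T:ℝ) - (j+1 : ℕ))) else 0) (T-1)]
      rw [Finset.sum_congr rfl (fun j _ => if_congr
        (show j + (e:ℕ) + 1 < T ↔ j < T - 1 - (e:ℕ) by omega) rfl rfl)]
      rw [Chead (T - 1 - (e:ℕ)) (T-1) (by omega)]
      have expand : ∀ j : ℕ, w * (1 - b * ((T:ℝ) - (j+1 : ℕ)))
          = (w - w*b*(T:ℝ) + w*b) + (w*b) * (j:ℝ) := by
        intro j; push_cast; ring
      rw [Finset.sum_congr rfl (fun j _ => expand j), Finset.sum_add_distrib,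
        Finset.sum_const, Finset.card_range, nsmul_eq_mul, ← Finset.mul_sum, G1]
      ring
    rw [hval]
  -- entries of S * (μ • ∑ Z) at column (k', e)
  have hB3 : ∀ p : Fin mI, (S * (((mI * (T - 1) : ℕ) : ℝ)⁻¹ • ∑ i, Z i)) p (k', e)
      = ((mI:ℝ)*((T:ℝ)-1))⁻¹ * w * (((T:ℝ)*((T:ℝ)-1)/2 - (((e:ℕ):ℝ)+1)*((((e:ℕ):ℝ)+1)-1)/2)
          - b*((T:ℝ)*((T:ℝ)-1)/2)*((T:ℝ) - (((e:ℕ):ℝ)+1))) := by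
    intro p
    have hZ2 : ∀ t : Fin T, (∑ i, Z i) t (k', e)
        = (if (e:ℕ)+1 ≤ (t:ℕ) then (1:ℝ) else 0) := by
      intro t
      rw [Matrix.sum_apply, Fintype.sum_prod_type]
      have hterm : ∀ (k₀ : Fin mI) (l : Fin (T-1)), Z (k₀,l) t (k',e)
          = if k' = k₀ then (if (t:ℕ) = (l:ℕ) + ((e:ℕ)+1) then (1:ℝ) else 0) else 0 := by
        intro k₀ l
        by_cases h1 : k' = k₀ <;> by_cases h2 : (t:ℕ) = (l:ℕ) + ((e:ℕ)+1) <;>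
          simp [hZ, h1, h2, ← add_assoc]
      rw [Finset.sum_congr rfl (fun k₀ _ => Finset.sum_congr rfl (fun l _ => hterm k₀ l))]
      have pull : ∀ k₀ : Fin mI, (∑ l : Fin (T-1), if k' = k₀ then
          (if (t:ℕ) = (l:ℕ) + ((e:ℕ)+1) then (1:ℝ) else 0) else 0)
          = if k' = k₀ then
              ∑ l : Fin (T-1), (if (t:ℕ) = (l:ℕ) + ((e:ℕ)+1) then (1:ℝ) else 0) else 0 := by
        intro k₀; split <;> simp
      rw [Finset.sum_congr rfl (fun k₀ _ => pull k₀),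
        Finset.sum_ite_eq Finset.univ k' _, if_pos (Finset.mem_univ k')]
      rw [Fin.sum_univ_eq_sum_range (fun j => if (t:ℕ) = j + ((e:ℕ)+1) then (1:ℝ) else 0) (T-1),
        Dsum (T-1) (t:ℕ) ((e:ℕ)+1) 1]
      exact if_congr (by have := t.isLt; omega) rfl rfl
    simp only [Matrix.mul_apply, Matrix.smul_apply, smul_eq_mul]
    rw [Finset.sum_congr rfl (fun t _ => by rw [hSe p t, hZ2 t, hμ])]
    have expand : ∀ t : Fin T,
        w * (((t:ℕ):ℝ) - b * ((T:ℝ)*((T:ℝ)-1)/2))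
          * (((mI:ℝ)*((T:ℝ)-1))⁻¹ * (if (e:ℕ)+1 ≤ (t:ℕ) then (1:ℝ) else 0))
        = ((mI:ℝ)*((T:ℝ)-1))⁻¹ * w * (if (e:ℕ)+1 ≤ (t:ℕ) then ((t:ℕ):ℝ) else 0)
          - ((mI:ℝ)*((T:ℝ)-1))⁻¹ * w * b * ((T:ℝ)*((T:ℝ)-1)/2)
            * (if (e:ℕ)+1 ≤ (t:ℕ) then (1:ℝ) else 0) := by
      intro t; by_cases h : (e:ℕ)+1 ≤ (t:ℕ) <;> simp [h] <;> ring
    have he1 : (e:ℕ)+1 ≤ T := by omega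
    rw [Finset.sum_congr rfl (fun t _ => expand t), Finset.sum_sub_distrib, ← Finset.mul_sum,
      ← Finset.mul_sum, cwm_cnt T ((e:ℕ)+1) he1, cwm_cntid T ((e:ℕ)+1) he1]
    push_cast
    ring
  -- closed form of AW
  have hAWmat : AW = Matrix.of (fun p q : Fin mI => w * ((if p = q then c else 0) - d)) := by
    ext p q
    rw [hAW, Matrix.sub_apply, hA1 p q, hA3 p q, Matrix.of_apply, hc, hd]
    by_cases h : p = q
    · rw [if_pos h, if_pos h]; field_simp; ring
    · rw [if_neg h, if_neg h]; field_simp; ring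
  have hcdg : c = g + (mI:ℝ) * d := by rw [hc, hd, hg]; field_simp; ring
  have hwinv : w⁻¹ * w = 1 := inv_mul_cancel₀ hwne
  have hcinv : c⁻¹ * c = 1 := inv_mul_cancel₀ hc0
  have hginv : g⁻¹ * g = 1 := inv_mul_cancel₀ hg0
  -- explicit inverse of AW
  have hMAW : (Matrix.of (fun p q : Fin mI => w⁻¹ * ((1/c) * (if p = q then 1 else 0) + d/(c*g))))
      * AW = 1 := by
    ext p q
    rw [Matrix.mul_apply, hAWmat]
    simp only [Matrix.of_apply, Matrix.one_apply]
    have step : ∀ k₀ : Fin mI,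
        w⁻¹ * ((1/c) * (if p = k₀ then 1 else 0) + d/(c*g))
          * (w * ((if k₀ = q then c else 0) - d))
        = (if p = k₀ then (1:ℝ) else 0) * (if k₀ = q then 1 else 0)
            + (d/g) * (if k₀ = q then 1 else 0)
            - (d/c) * (if p = k₀ then 1 else 0) - d*d/(c*g) := by
      intro k₀
      have hsplit : (if k₀ = q then c else 0) = c * (if k₀ = q then (1:ℝ) else 0) := by
        split <;> ring
      rw [hsplit]
      set x : ℝ := (if p = k₀ then (1:ℝ) else 0) with hx
      set y : ℝ := (if k₀ = q then (1:ℝ) else 0) with hy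
      linear_combination (((1/c)*x + d/(c*g)) * (c*y - d)) * hwinv + (x*y + (d/g)*y) * hcinv
    rw [Finset.sum_congr rfl (fun k₀ _ => step k₀)]
    simp only [Finset.sum_sub_distrib, Finset.sum_add_distrib, ← Finset.mul_sum,
      Finset.sum_const, Finset.card_univ, Fintype.card_fin, nsmul_eq_mul]
    have s1 : ∑ k₀ : Fin mI, (if p = k₀ then (1:ℝ) else 0) * (if k₀ = q then 1 else 0)
        = if p = q then 1 else 0 := by
      rw [Finset.sum_eq_single q]
      · by_cases h : p = q <;> simp [h]
      · intro l _ hl; simp [hl]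
      · simp
    have s2 : ∑ k₀ : Fin mI, (if k₀ = q then (1:ℝ) else 0) = 1 := by
      rw [Finset.sum_ite_eq' Finset.univ q (fun _ => (1:ℝ))]; simp
    have s3 : ∑ k₀ : Fin mI, (if p = k₀ then (1:ℝ) else 0) = 1 := by
      rw [Finset.sum_ite_eq Finset.univ p (fun _ => (1:ℝ))]; simp
    rw [s1, s2, s3]
    linear_combination (c⁻¹ * g⁻¹ * d) * hcdg - (d * g⁻¹) * hcinv + (d * c⁻¹) * hginv
  have hAWinv : AW⁻¹
      = Matrix.of (fun p q : Fin mI => w⁻¹ * ((1/c) * (if p = q then 1 else 0) + d/(c*g))) :=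
    Matrix.inv_eq_left_inv hMAW
  -- closed form of the B-column
  have hKR : ((T - 1 - (e:ℕ) : ℕ):ℝ) = (T:ℝ) - 1 - ((e:ℕ):ℝ) := by
    have h1 : (e:ℕ) ≤ T - 1 := le_of_lt e.isLt
    rw [Nat.cast_sub h1, hT1R]
  have hBmat : ∀ p : Fin mI,
      ((∑ i, (X i)ᵀ * V⁻¹ * Z i) - S * (((mI * (T - 1) : ℕ) : ℝ)⁻¹ • ∑ i, Z i)) p (k', e)
      = w * ((if p = k' then r e else 0) - v e) := by
    intro p
    rw [Matrix.sub_apply, hB1 p, hB3 p, hr e, hv e, hKR]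
    by_cases h : p = k'
    · rw [if_pos h, if_pos h]
      push_cast
      field_simp
      ring
    · rw [if_neg h, if_neg h]
      push_cast
      field_simp
      ring
  -- final assembly
  rw [hH, hAWinv, Matrix.mul_apply]
  rw [Finset.sum_congr rfl (fun k₀ _ => by rw [hBmat k₀])]
  have step : ∀ k₀ : Fin mI,
      (Matrix.of (fun p q : Fin mI => w⁻¹ * ((1/c) * (if p = q then 1 else 0) + d/(c*g)))) k k₀
        * (w * ((if k₀ = k' then r e else 0) - v e))
      = (1/c) * (r e) * ((if k = k₀ then (1:ℝ) else 0) * (if k₀ = k' then 1 else 0))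
        + (d/(c*g)) * (r e) * (if k₀ = k' then 1 else 0)
        - (1/c) * (v e) * (if k = k₀ then 1 else 0) - (d/(c*g)) * (v e) := by
    intro k₀
    show w⁻¹ * ((1/c) * (if k = k₀ then 1 else 0) + d/(c*g))
        * (w * ((if k₀ = k' then r e else 0) - v e)) = _
    have hsplit : (if k₀ = k' then r e else 0) = (r e) * (if k₀ = k' then (1:ℝ) else 0) := by
      split <;> ring
    rw [hsplit]
    set x : ℝ := (if k = k₀ then (1:ℝ) else 0) with hx
    set y : ℝ := (if k₀ = k' then (1:ℝ) else 0) with hy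
    linear_combination (((1/c)*x + d/(c*g)) * ((r e)*y - v e)) * hwinv
  rw [Finset.sum_congr rfl (fun k₀ _ => step k₀)]
  simp only [Finset.sum_sub_distrib, Finset.sum_add_distrib, ← Finset.mul_sum,
    Finset.sum_const, Finset.card_univ, Fintype.card_fin, nsmul_eq_mul]
  have s1 : ∑ k₀ : Fin mI, (if k = k₀ then (1:ℝ) else 0) * (if k₀ = k' then 1 else 0)
      = if k = k' then 1 else 0 := by
    rw [Finset.sum_eq_single k']
    · by_cases h : k = k' <;> simp [h]
    · intro l _ hl; simp [hl]
    · simp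
  have s2 : ∑ k₀ : Fin mI, (if k₀ = k' then (1:ℝ) else 0) = 1 := by
    rw [Finset.sum_ite_eq' Finset.univ k' (fun _ => (1:ℝ))]; simp
  have s3 : ∑ k₀ : Fin mI, (if k = k₀ then (1:ℝ) else 0) = 1 := by
    rw [Finset.sum_ite_eq Finset.univ k (fun _ => (1:ℝ))]; simp
  rw [s1, s2, s3]
  linear_combination (v e * c⁻¹ * g⁻¹) * hcdg - (v e * g⁻¹) * hcinv + (v e * c⁻¹) * hginv
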